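/- arXiv:1709.00629 — 2 statements merged into one kernel-verified Lean document; each statement's English description precedes it below -/
import Mathlib

section
/- For every real $s > 0$ and every $y \in \mathbb{R}$, the following Fourier inversion identity for the Gamma function holds: $\frac{1}{2\pi}\int_{-\infty}^{\infty} e^{-i\omega y}\,\Gamma(s + i\omega)\,d\omega = e^{sy}\exp(-e^{y})$. -/
open MeasureTheory Complex Set Filter Asymptotics

lemma aux_norm_Gamma_le {z : ℂ} (hz : 0 < z.re) : ‖Complex.Gamma z‖ ≤ Real.Gamma z.re := by
  rw [Complex.Gamma_eq_integral hz, Complex.GammaIntegral, Real.Gamma_eq_integral hz]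
  refine (norm_integral_le_integral_norm _).trans_eq ?_
  refine setIntegral_congr_fun measurableSet_Ioi fun x hx => ?_
  rw [norm_mul, Complex.norm_real, Real.norm_eq_abs,
    Complex.norm_cpow_eq_rpow_re_of_pos hx]
  simp [_root_.abs_of_nonneg (Real.exp_pos _).le]

lemma aux_gamma_line_integrable (s : ℝ) (hs : 0 < s) :
    Integrable (fun ω : ℝ => Complex.Gamma (s + ω * Complex.I)) := by
  have hre : ∀ ω : ℝ, ((s : ℂ) + ω * Complex.I).re = s := by
    intro ω; simp
  have hne : ∀ ω : ℝ, ∀ m : ℕ, (s : ℂ) + ω * Complex.I ≠ -m := by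
    intro ω m h
    have := congrArg Complex.re h
    rw [hre] at this
    simp at this
    nlinarith [this]
  have hcont : Continuous fun ω : ℝ => Complex.Gamma (s + ω * Complex.I) := by
    refine continuous_iff_continuousAt.mpr fun ω => ?_
    have h2 : ContinuousAt (fun ω : ℝ => (s : ℂ) + ω * Complex.I) ω := by fun_prop
    exact ContinuousAt.comp (f := fun ω : ℝ => (s : ℂ) + ω * Complex.I) (x := ω)
      (Complex.differentiableAt_Gamma _ (hne ω)).continuousAt h2
  refine (hcont.locallyIntegrable).integrable_of_isBigO_atTop_of_norm_isNegInvariant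
    ?_ (g := fun ω : ℝ => ω ^ (-2 : ℝ)) ?_
    ⟨Ioi 1, Ioi_mem_atTop 1, integrableOn_Ioi_rpow_of_lt (by norm_num) one_pos⟩
  · filter_upwards with ω
    have hc : (starRingEnd ℂ) ((s : ℂ) + ω * Complex.I) = (s : ℂ) + (-ω : ℝ) * Complex.I := by
      simp [map_add, map_mul, Complex.conj_I, Complex.conj_ofReal]
    simp only [Function.comp]
    rw [← hc, Complex.Gamma_conj]
    simp
  · rw [isBigO_iff]
    refine ⟨Real.Gamma (s + 2), ?_⟩
    filter_upwards [eventually_ge_atTop (1 : ℝ)] with ω hω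
    set z : ℂ := (s : ℂ) + ω * Complex.I with hz
    have hz0 : z ≠ 0 := by
      intro h; have := congrArg Complex.re h; rw [hre] at this; simp at this; linarith
    have hz1 : z + 1 ≠ 0 := by
      intro h
      have := congrArg Complex.re h
      simp [hz] at this; linarith
    have hkey : Complex.Gamma (z + 2) = (z + 1) * (z * Complex.Gamma z) := by
      have h2 : z + 2 = (z + 1) + 1 := by ring
      rw [h2, Complex.Gamma_add_one _ hz1, Complex.Gamma_add_one _ hz0]
    have him : |ω| ≤ ‖z‖ := by
      have : |ω| = |z.im| := by simp [hz]
      rw [this]; exact Complex.abs_im_le_norm z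
    have him1 : |ω| ≤ ‖z + 1‖ := by
      have : |ω| = |(z + 1).im| := by simp [hz]
      rw [this]; exact Complex.abs_im_le_norm (z + 1)
    have hω0 : (0:ℝ) < ω := lt_of_lt_of_le one_pos hω
    have hgam : ‖Complex.Gamma (z + 2)‖ ≤ Real.Gamma (s + 2) := by
      have : (z + 2).re = s + 2 := by simp [hz]
      have h := aux_norm_Gamma_le (z := z + 2) (by rw [this]; linarith)
      rwa [this] at h
    have hGn : ‖Complex.Gamma z‖ * (ω * ω) ≤ Real.Gamma (s + 2) := by
      calc ‖Complex.Gamma z‖ * (ω * ω) ≤ ‖Complex.Gamma z‖ * (‖z + 1‖ * ‖z‖) := by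
            refine mul_le_mul_of_nonneg_left ?_ (norm_nonneg _)
            rw [← _root_.abs_of_pos hω0]
            exact mul_le_mul him1 him (abs_nonneg ω) (norm_nonneg _)
        _ = ‖Complex.Gamma (z + 2)‖ := by rw [hkey]; simp [norm_mul]; ring
        _ ≤ Real.Gamma (s + 2) := hgam
    have hrw : ω ^ (-2 : ℝ) = (ω * ω)⁻¹ := by
      rw [show (-2:ℝ) = -(2:ℕ) by norm_num, Real.rpow_neg hω0.le, Real.rpow_natCast]
      ring_nf
    calc ‖Complex.Gamma z‖ = ‖Complex.Gamma z‖ * (ω * ω) * (ω * ω)⁻¹ := by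
          field_simp
      _ ≤ Real.Gamma (s + 2) * (ω * ω)⁻¹ :=
          mul_le_mul_of_nonneg_right hGn (by positivity)
      _ = Real.Gamma (s + 2) * ‖ω ^ (-2 : ℝ)‖ := by
          rw [Real.norm_eq_abs, hrw, _root_.abs_of_pos (by positivity : (0:ℝ) < (ω*ω)⁻¹)]

/-- Fourier inversion identity for the Gamma function:
`(2π)⁻¹ ∫ e^{-iωy} Γ(s+iω) dω = e^{sy} exp(-e^y)`. -/
theorem stmt10 (s : ℝ) (hs : 0 < s) (y : ℝ) :
    (1 / (2 * Real.pi) : ℂ) *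
        ∫ ω : ℝ, Complex.exp (-(Complex.I * ω * y)) * Complex.Gamma (s + ω * Complex.I)
      = ((Real.exp (s * y) * Real.exp (-Real.exp y) : ℝ) : ℂ) := by
  set F : ℝ → ℂ := fun t => Complex.exp (-t) with hF
  have hptwise : ∀ z : ℂ, EqOn (fun x : ℝ => (Real.exp (-x) : ℂ) * (x : ℂ) ^ (z - 1))
      (fun t : ℝ => (t : ℂ) ^ (z - 1) • F t) (Ioi 0) := by
    intro z t _
    simp only [F, smul_eq_mul]
    rw [mul_comm]
    congr 1
    push_cast [Complex.ofReal_exp]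
    ring_nf
  have hmel : ∀ z : ℂ, 0 < z.re → mellin F z = Complex.Gamma z := by
    intro z hz
    rw [Complex.Gamma_eq_integral hz, Complex.GammaIntegral, mellin]
    exact (setIntegral_congr_fun measurableSet_Ioi (hptwise z)).symm
  have hre : ∀ ω : ℝ, ((s : ℂ) + ω * Complex.I).re = s := by intro ω; simp
  have hconv : MellinConvergent F s := by
    refine (Complex.GammaIntegral_convergent (s := (s : ℂ)) (by simpa using hs)).congr_fun
      ?_ measurableSet_Ioi
    exact hptwise _
  have hvert : Complex.VerticalIntegrable (mellin F) s := by
    refine (aux_gamma_line_integrable s hs).congr ?_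
    filter_upwards with ω
    exact (hmel _ (by rw [hre ω]; exact hs)).symm
  have hcf : ContinuousAt F (Real.exp y) := by fun_prop
  have hinv := mellinInv_mellin_eq s F (Real.exp_pos y) hconv hvert hcf
  rw [mellinInv] at hinv
  have hintg : ∀ ω : ℝ, ((Real.exp y : ℝ) : ℂ) ^ (-((s : ℂ) + ω * Complex.I)) •
      mellin F ((s : ℂ) + ω * Complex.I) =
      Complex.exp (-((s : ℂ) * y)) *
        (Complex.exp (-(Complex.I * ω * y)) * Complex.Gamma (s + ω * Complex.I)) := by
    intro ω
    rw [hmel _ (by rw [hre ω]; exact hs), smul_eq_mul, ← mul_assoc]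
    congr 1
    rw [Complex.ofReal_exp, Complex.cpow_def_of_ne_zero (Complex.exp_ne_zero _),
      Complex.log_exp (by simpa using Real.pi_pos) (by simpa using Real.pi_nonneg),
      ← Complex.exp_add]
    congr 1
    ring
  simp_rw [hintg, MeasureTheory.integral_const_mul] at hinv
  rw [Complex.real_smul] at hinv
  push_cast at hinv
  set T : ℂ := ∫ ω : ℝ, Complex.exp (-(Complex.I * ω * y)) * Complex.Gamma (s + ω * Complex.I)
    with hT
  have h1 : Complex.exp ((s : ℂ) * y) * Complex.exp (-((s : ℂ) * y)) = 1 := by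
    rw [← Complex.exp_add]; simp
  have hRHS : ((Real.exp (s * y) * Real.exp (-Real.exp y) : ℝ) : ℂ) =
      Complex.exp ((s : ℂ) * y) * F (Real.exp y) := by
    simp only [F]
    push_cast [Complex.ofReal_exp]
    ring_nf
  rw [hRHS, ← hinv]
  rw [← mul_assoc, mul_comm (Complex.exp ((s : ℂ) * y)) (1 / (2 * (Real.pi : ℂ))),
    mul_assoc, ← mul_assoc (Complex.exp ((s : ℂ) * y)), h1, one_mul]
end

section
/- (Bias bound for log-kernel smoothing, simplest case $\beta \le 1$.) Let $x > 0$, $r > 1$, $A > 0$, $0 < \beta \le 1$, and let $f$ be a probability density on $(0,\infty)$ satisfying $|f(u) - f(v)| \le A|u-v|^{\beta}$ for all $u,v \in [x/r, rx]$ and $f(u) \le A$ for $u \in [x/r, rx]$. Let $K : [-1,1] \to \mathbb{R}$ be bounded with $\int_{-1}^{1}K(t)\,dt = 1$, and for $0 < h < \min(\ln r, 1)$ set $K_h(x,y) = \frac{1}{xh}K\big(\frac{\ln(y/x)}{h}\big)$ for $y > 0$. Then there is a constant $c$ depending only on $\beta$ such that $\Big|\int_0^\infty K_h(x,y)f(y)\,dy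 - f(x)\Big| \le c\,A\,\|K\|_1\,\big[h^{\beta}x^{\beta} + h\big]$, where $\|K\|_1 = \int_{-1}^1|K(t)|\,dt$. -/
set_option maxHeartbeats 1000000


open MeasureTheory

/-- Bias bound for log-kernel smoothing (case `β ≤ 1`): there is a constant `c = c(β)` with
`|∫ K_h(x,y) f(y) dy − f(x)| ≤ c A ‖K‖₁ (h^β x^β + h)`. -/
theorem stmt19 (β : ℝ) (hβ0 : 0 < β) (hβ1 : β ≤ 1) :
    ∃ c : ℝ, 0 < c ∧
      ∀ (x r A h : ℝ) (f K : ℝ → ℝ),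
        0 < x → 1 < r → 0 < A →
        Measurable f → Measurable K →
        (∀ t, 0 ≤ f t) → (∫ t in Set.Ioi (0:ℝ), f t = 1) →
        (∀ u ∈ Set.Icc (x / r) (r * x), ∀ v ∈ Set.Icc (x / r) (r * x),
          |f u - f v| ≤ A * |u - v| ^ β) →
        (∀ u ∈ Set.Icc (x / r) (r * x), f u ≤ A) →
        (∀ t : ℝ, 1 < |t| → K t = 0) →
        (∃ B : ℝ, ∀ t, |K t| ≤ B) →
        (∫ t in Set.Icc (-1:ℝ) 1, K t = 1) →
        0 < h → h < min (Real.log r) 1 →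
        |(∫ y in Set.Ioi (0:ℝ), (1 / (x * h)) * K (Real.log (y / x) / h) * f y) - f x|
          ≤ c * A * (∫ t in Set.Icc (-1:ℝ) 1, |K t|) * (h ^ β * x ^ β + h) := by
  refine ⟨6, by norm_num, ?_⟩
  intro x r A h f K hx hr hA hfm hKm hf0 _hf1 hHol hfA hKsupp ⟨B, hKB⟩ hKint hh hhlt
  have hhr : h < Real.log r := lt_of_lt_of_le hhlt (min_le_left _ _)
  have hh1 : h < 1 := lt_of_lt_of_le hhlt (min_le_right _ _)
  have hr0 : (0:ℝ) < r := lt_trans one_pos hr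
  set u : ℝ → ℝ := fun t => x * Real.exp (t * h) with hu
  -- substitution y = x e^{th}
  have hsub : ∀ g : ℝ → ℝ, ∫ y in Set.Ioi (0:ℝ), g y
      = ∫ t, (x * h * Real.exp (t * h)) * g (u t) := by
    intro g
    have himg : u '' Set.univ = Set.Ioi 0 := by
      ext y
      simp only [Set.image_univ, Set.mem_range, Set.mem_Ioi, hu]
      constructor
      · rintro ⟨t, rfl⟩; positivity
      · intro hy
        exact ⟨Real.log (y / x) / h, by
          rw [div_mul_cancel₀ _ hh.ne', Real.exp_log (by positivity)]
          field_simp⟩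
    have hderiv : ∀ t ∈ Set.univ, HasDerivWithinAt u
        (x * (Real.exp (t * h) * h)) Set.univ t := by
      intro t _
      exact (((Real.hasDerivAt_exp (t * h)).comp t
        (by simpa using (hasDerivAt_id t).mul_const h)).const_mul x).hasDerivWithinAt
    have hinj : Set.InjOn u Set.univ := by
      intro a _ b _ hab
      have := mul_left_cancel₀ hx.ne' hab
      have := Real.exp_injective this
      exact mul_right_cancel₀ hh.ne' this
    have := integral_image_eq_integral_abs_deriv_smul MeasurableSet.univ hderiv hinj g
    rw [himg] at this
    rw [this, setIntegral_univ]
    congr 1; ext t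
    rw [smul_eq_mul, abs_of_pos (by positivity)]
    ring
  have hxh : x * h ≠ 0 := by positivity
  have h1 : (∫ y in Set.Ioi (0:ℝ), (1 / (x * h)) * K (Real.log (y / x) / h) * f y)
      = ∫ t, K t * (Real.exp (t * h) * f (u t)) := by
    rw [hsub (fun y => (1 / (x * h)) * K (Real.log (y / x) / h) * f y)]
    congr 1; ext t
    have : Real.log (u t / x) / h = t := by
      rw [hu]
      simp only []
      rw [mul_comm x, mul_div_assoc, div_self hx.ne', mul_one, Real.log_exp,
        mul_div_cancel_right₀ _ hh.ne']
    rw [this]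
    field_simp
  -- restrict to Icc
  have h2 : (∫ t, K t * (Real.exp (t * h) * f (u t)))
      = ∫ t in Set.Icc (-1:ℝ) 1, K t * (Real.exp (t * h) * f (u t)) := by
    refine (setIntegral_eq_integral_of_forall_compl_eq_zero fun t ht => ?_).symm
    have : 1 < |t| := by
      rw [Set.mem_Icc, not_and_or, not_le, not_le] at ht
      rcases ht with h' | h'
      · rw [abs_of_neg (by linarith)]; linarith
      · rw [abs_of_pos (by linarith)]; exact h'
    rw [hKsupp t this, zero_mul]
  -- membership of u t
  have hmem : ∀ t ∈ Set.Icc (-1:ℝ) 1, u t ∈ Set.Icc (x / r) (r * x) := by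
    intro t ht
    have habs : |t * h| ≤ h := by
      rw [abs_mul, abs_of_pos hh]
      have : |t| ≤ 1 := abs_le.2 ⟨ht.1, ht.2⟩
      nlinarith
    have hl : -Real.log r ≤ t * h := by
      have := (abs_le.1 habs).1; linarith
    have hup : t * h ≤ Real.log r := by
      have := (abs_le.1 habs).2; linarith
    constructor
    · have h' : Real.exp (-Real.log r) ≤ Real.exp (t * h) := Real.exp_le_exp.2 hl
      rw [Real.exp_neg, Real.exp_log hr0] at h'
      show x / r ≤ x * Real.exp (t * h)
      rw [div_eq_mul_inv]
      exact mul_le_mul_of_nonneg_left h' hx.le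
    · have h' : Real.exp (t * h) ≤ Real.exp (Real.log r) := Real.exp_le_exp.2 hup
      rw [Real.exp_log hr0] at h'
      show x * Real.exp (t * h) ≤ r * x
      nlinarith
  have hxmem : x ∈ Set.Icc (x / r) (r * x) :=
    ⟨(div_le_self hx.le hr.le), le_mul_of_one_le_left hx.le hr.le⟩
  -- integrability
  have hvol : volume (Set.Icc (-1:ℝ) 1) ≠ ⊤ := by
    rw [Real.volume_Icc]; exact ENNReal.ofReal_ne_top
  have hIK : IntegrableOn K (Set.Icc (-1:ℝ) 1) := by
    refine Measure.integrableOn_of_bounded (M := B) hvol hKm.aestronglyMeasurable ?_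
    exact Filter.Eventually.of_forall fun t => by simpa using hKB t
  have hI1 : IntegrableOn (fun t => K t * (Real.exp (t * h) * f (u t)))
      (Set.Icc (-1:ℝ) 1) := by
    refine Measure.integrableOn_of_bounded (M := B * (Real.exp 1 * A)) hvol ?_ ?_
    · exact (hKm.mul ((Real.measurable_exp.comp (measurable_id.mul_const h)).mul
        (hfm.comp ((measurable_id.mul_const h).exp.const_mul x)))).aestronglyMeasurable
    · refine (ae_restrict_iff' measurableSet_Icc).2 (Filter.Eventually.of_forall fun t ht => ?_)
      have habs : |t * h| ≤ h := by
        rw [abs_mul, abs_of_pos hh]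
        have : |t| ≤ 1 := abs_le.2 ⟨ht.1, ht.2⟩
        nlinarith
      have hE : Real.exp (t * h) ≤ Real.exp 1 :=
        Real.exp_le_exp.2 (by linarith [(abs_le.1 habs).2])
      have hfu : f (u t) ≤ A := hfA _ (hmem t ht)
      rw [Real.norm_eq_abs, abs_mul]
      have h1' : |Real.exp (t * h) * f (u t)| ≤ Real.exp 1 * A := by
        rw [abs_of_nonneg (mul_nonneg (Real.exp_pos _).le (hf0 _))]
        have := hf0 (u t)
        nlinarith [Real.exp_pos (t * h)]
      have hB0 : 0 ≤ B := le_trans (abs_nonneg _) (hKB 0)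
      nlinarith [hKB t, abs_nonneg (K t), abs_nonneg (Real.exp (t * h) * f (u t))]
  have hI2 : IntegrableOn (fun t => K t * f x) (Set.Icc (-1:ℝ) 1) := hIK.mul_const _
  -- rewrite difference
  have h3 : (∫ t in Set.Icc (-1:ℝ) 1, K t * (Real.exp (t * h) * f (u t))) - f x
      = ∫ t in Set.Icc (-1:ℝ) 1, K t * (Real.exp (t * h) * f (u t) - f x) := by
    have hfx' : f x = ∫ t in Set.Icc (-1:ℝ) 1, K t * f x := by
      rw [integral_mul_const, hKint, one_mul]
    conv_lhs => rw [hfx']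
    rw [← integral_sub hI1 hI2]
    congr 1; ext t; ring
  -- pointwise bound
  have hpt : ∀ t ∈ Set.Icc (-1:ℝ) 1,
      |Real.exp (t * h) * f (u t) - f x| ≤ 6 * A * (h ^ β * x ^ β + h) := by
    intro t ht
    have habs : |t * h| ≤ h := by
      rw [abs_mul, abs_of_pos hh]
      have : |t| ≤ 1 := abs_le.2 ⟨ht.1, ht.2⟩
      nlinarith
    have habs1 : |t * h| ≤ 1 := le_trans habs hh1.le
    have key1 : |Real.exp (t * h) - 1| ≤ 2 * h :=
      le_trans (Real.abs_exp_sub_one_le habs1) (by linarith)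
    have key2 : Real.exp (t * h) ≤ 3 := by
      calc Real.exp (t * h) ≤ Real.exp 1 :=
            Real.exp_le_exp.2 (le_trans (le_abs_self _) habs1)
        _ ≤ 3 := by linarith [Real.exp_one_lt_d9]
    have hfu : f (u t) ≤ A := hfA _ (hmem t ht)
    have hfx : f x ≤ A := hfA _ hxmem
    have hHo : |f (u t) - f x| ≤ A * |u t - x| ^ β := hHol _ (hmem t ht) _ hxmem
    have hux : |u t - x| ≤ 2 * (h * x) := by
      have : u t - x = x * (Real.exp (t * h) - 1) := by rw [hu]; ring
      rw [this, abs_mul, abs_of_pos hx]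
      nlinarith
    have hpow : |u t - x| ^ β ≤ 2 * (h ^ β * x ^ β) := by
      calc |u t - x| ^ β ≤ (2 * (h * x)) ^ β :=
            Real.rpow_le_rpow (abs_nonneg _) hux hβ0.le
        _ = 2 ^ β * (h ^ β * x ^ β) := by
            rw [Real.mul_rpow (by norm_num) (by positivity),
              Real.mul_rpow hh.le hx.le]
        _ ≤ 2 * (h ^ β * x ^ β) := by
            have h2 : (2:ℝ) ^ β ≤ 2 ^ (1:ℝ) :=
              Real.rpow_le_rpow_of_exponent_le (by norm_num) hβ1
            rw [Real.rpow_one] at h2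
            have : (0:ℝ) ≤ h ^ β * x ^ β := by positivity
            nlinarith
    have hE0 := Real.exp_pos (t * h)
    calc |Real.exp (t * h) * f (u t) - f x|
        = |Real.exp (t * h) * (f (u t) - f x) + (Real.exp (t * h) - 1) * f x| := by ring_nf
      _ ≤ Real.exp (t * h) * |f (u t) - f x| + |Real.exp (t * h) - 1| * f x := by
          refine le_trans (abs_add_le _ _) ?_
          rw [abs_mul, abs_mul, abs_of_pos hE0, abs_of_nonneg (hf0 x)]
      _ ≤ 3 * (A * (2 * (h ^ β * x ^ β))) + 2 * h * A := by
          have := hf0 x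
          have h1' : |f (u t) - f x| ≤ A * (2 * (h ^ β * x ^ β)) :=
            le_trans hHo (by nlinarith)
          nlinarith [abs_nonneg (f (u t) - f x), abs_nonneg (Real.exp (t * h) - 1)]
      _ ≤ 6 * A * (h ^ β * x ^ β + h) := by nlinarith
  -- finish
  rw [h1, h2, h3]
  calc |∫ t in Set.Icc (-1:ℝ) 1, K t * (Real.exp (t * h) * f (u t) - f x)|
      ≤ ∫ t in Set.Icc (-1:ℝ) 1, |K t * (Real.exp (t * h) * f (u t) - f x)| := by
        simpa only [Real.norm_eq_abs] using
          norm_integral_le_integral_norm (μ := volume.restrict (Set.Icc (-1:ℝ) 1))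
            (f := fun t => K t * (Real.exp (t * h) * f (u t) - f x))
    _ ≤ ∫ t in Set.Icc (-1:ℝ) 1, |K t| * (6 * A * (h ^ β * x ^ β + h)) := by
        have hI3 : IntegrableOn
            (fun t => |K t * (Real.exp (t * h) * f (u t) - f x)|) (Set.Icc (-1:ℝ) 1) := by
          have := (hI1.sub hI2).abs
          simpa [Pi.sub_apply, mul_sub, IntegrableOn] using this
        refine setIntegral_mono_on hI3 (hIK.abs.mul_const _)
          measurableSet_Icc fun t ht => ?_
        rw [abs_mul]
        exact mul_le_mul_of_nonneg_left (hpt t ht) (abs_nonneg _)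
    _ = 6 * A * (∫ t in Set.Icc (-1:ℝ) 1, |K t|) * (h ^ β * x ^ β + h) := by
        rw [integral_mul_const]; ring
end
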